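/- Consider the Nörlund logarithmic means of the Walsh–Fourier series, i.e. the Walsh–Nörlund means with weights q_0 := 1 and q_j := 1/j for j ≥ 1, so that t_n(f) = (1/Q_n) Σ_{k=1}^{n−1} S_k(f)/(n−k) + (q_0/Q_n) S_n(f) with Q_n = 1 + Σ_{j=1}^{n−1} 1/j, and let t*(f) := sup_{n≥1} |t_n(f)|. Then for every p ∈ (0, 1] the operator t* is not bounded from the dyadic Hardy space H_p[0,1) to L^p[0,1): there is no constant C with ‖t*(f)‖_{L^p} ≤ C ‖f‖_{H_p} for all f with ‖f‖_{H_p} < ∞. -/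

import Mathlib

open MeasureTheory Filter
open scoped ENNReal NNReal

noncomputable section

namespace Walsh

/-- Lebesgue measure restricted to `[0,1)`. -/
def μI : Measure ℝ := volume.restrict (Set.Ico (0:ℝ) 1)

/-- The `k`-th binary digit `x_k` of `x ∈ [0,1)`, using the expansion terminating
in `0`'s for dyadic rationals. -/
def digit (k : ℕ) (x : ℝ) : ℕ := (⌊x * 2 ^ (k + 1)⌋).toNat % 2

/-- `ε_k(n)`, the `k`-th binary coefficient of `n`. -/
def eps (k n : ℕ) : ℕ := if n.testBit k then 1 else 0

/-- Walsh–Paley function `w_n(x) = (-1)^{Σ_k ε_k(n) x_k}`. -/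
def walsh (n : ℕ) (x : ℝ) : ℝ :=
  (-1 : ℝ) ^ (∑ k ∈ Finset.range (n + 1), eps k n * digit k x)

/-- Walsh–Dirichlet kernel `D_n = Σ_{k=0}^{n-1} w_k`. -/
def D (n : ℕ) (x : ℝ) : ℝ := ∑ k ∈ Finset.range n, walsh k x

/-- Walsh–Fejér kernel `K_n = (1/n) Σ_{k=1}^{n} D_k`. -/
def K (n : ℕ) (x : ℝ) : ℝ := (1 / (n : ℝ)) * ∑ k ∈ Finset.Icc 1 n, D k x

/-- Partial sums `S_M(f) = Σ_{i=0}^{M-1} f̂(i) w_i` of the Walsh–Fourier series. -/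
def S (f : ℝ → ℝ) (M : ℕ) (x : ℝ) : ℝ :=
  ∑ i ∈ Finset.range M, (∫ t in Set.Ico (0:ℝ) 1, f t * walsh i t) * walsh i x

/-- `Q_n = q_0 + ⋯ + q_{n-1}`. -/
def Q (q : ℕ → ℝ) (n : ℕ) : ℝ := ∑ k ∈ Finset.range n, q k

/-- Walsh–Nörlund mean `t_n(f) = (1/Q_n) Σ_{k=1}^n q_{n-k} S_k(f)`. -/
def t (q : ℕ → ℝ) (n : ℕ) (f : ℝ → ℝ) (x : ℝ) : ℝ :=
  (1 / Q q n) * ∑ k ∈ Finset.Icc 1 n, q (n - k) * S f k x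

/-- Walsh–Nörlund kernel `F_n = (1/Q_n) Σ_{k=1}^n q_{n-k} D_k`. -/
def F (q : ℕ → ℝ) (n : ℕ) (x : ℝ) : ℝ :=
  (1 / Q q n) * ∑ k ∈ Finset.Icc 1 n, q (n - k) * D k x

/-- Maximal Nörlund operator `t^*(f) = sup_{n ≥ 1} |t_n(f)|`, valued in `ℝ≥0∞`. -/
def tstar (q : ℕ → ℝ) (f : ℝ → ℝ) (x : ℝ) : ℝ≥0∞ :=
  ⨆ n ∈ Set.Ici 1, ENNReal.ofReal |t q n f x|

/-- `L^p[0,1)` quasinorm (`0 < p ≤ 1`) of a real function, valued in `ℝ≥0∞`. -/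
def LpNorm (p : ℝ) (g : ℝ → ℝ) : ℝ≥0∞ :=
  (∫⁻ x in Set.Ico (0:ℝ) 1, ENNReal.ofReal |g x| ^ p) ^ (1 / p)

/-- `L^p[0,1)` quasinorm of an `ℝ≥0∞`-valued function. -/
def LpNormE (p : ℝ) (g : ℝ → ℝ≥0∞) : ℝ≥0∞ :=
  (∫⁻ x in Set.Ico (0:ℝ) 1, g x ^ p) ^ (1 / p)

/-- `L^∞[0,1)` norm. -/
def LinfNorm (g : ℝ → ℝ) : ℝ≥0∞ := essSup (fun x => ENNReal.ofReal |g x|) μI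

/-- Dyadic maximal function `E^*(f) = sup_m |S_{2^m}(f)|`, valued in `ℝ≥0∞`. -/
def maxS (f : ℝ → ℝ) (x : ℝ) : ℝ≥0∞ := ⨆ m : ℕ, ENNReal.ofReal |S f (2 ^ m) x|

/-- Dyadic Hardy space quasinorm `‖f‖_{H_p} = ‖sup_m |S_{2^m} f|‖_{L^p}`. -/
def HpNorm (p : ℝ) (f : ℝ → ℝ) : ℝ≥0∞ :=
  (∫⁻ x in Set.Ico (0:ℝ) 1, maxS f x ^ p) ^ (1 / p)

/-- Dyadic (logical) addition `x ∔ y = Σ_k |x_k - y_k| 2^{-(k+1)}`. -/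
def dadd (x y : ℝ) : ℝ :=
  ∑' k : ℕ, |(digit k x : ℝ) - (digit k y : ℝ)| * (2 : ℝ)⁻¹ ^ (k + 1)

/-- The dyadic interval `I_N = [0, 2^{-N})`. -/
def IN (N : ℕ) : Set ℝ := Set.Ico (0:ℝ) (1 / 2 ^ N)

/-- `F_{n,1} = (w_n/Q_n) Σ_{j=1}^r Q_{n^{(j-1)}} w_{2^{n_j}} D_{2^{n_j}}`,
the first part of the Nörlund kernel decomposition. The sum over the binary
decomposition `n = 2^{n_1} + ⋯ + 2^{n_r}` is re-indexed over the set bit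
positions `i` of `n`; if `i = n_j` then `n^{(j-1)} = n mod 2^{i+1}`. -/
def F1 (q : ℕ → ℝ) (n : ℕ) (x : ℝ) : ℝ :=
  (walsh n x / Q q n) *
    ∑ i ∈ Finset.range (n + 1),
      if n.testBit i then Q q (n % 2 ^ (i + 1)) * walsh (2 ^ i) x * D (2 ^ i) x else 0

-- ===== auxiliary development =====
-- AUX
lemma two_pow_xor {l u : ℕ} (h : u < 2^l) : 2^l ^^^ u = 2^l + u := by
  apply Nat.eq_of_testBit_eq; intro i
  rcases lt_trichotomy i l with hi | rfl | hi
  · rw [Nat.testBit_xor, Nat.testBit_two_pow_of_ne (by omega), Nat.testBit_two_pow_add_gt hi]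
    simp
  · rw [Nat.testBit_xor, Nat.testBit_two_pow_self, Nat.testBit_two_pow_add_eq,
      Nat.testBit_eq_false_of_lt h]
    rfl
  · have h1 : 2^l + u < 2^i := by
      calc 2^l + u < 2^l + 2^l := by omega
      _ = 2^(l+1) := by ring
      _ ≤ 2^i := Nat.pow_le_pow_right (by norm_num) (by omega)
    rw [Nat.testBit_xor, Nat.testBit_two_pow_of_ne (by omega),
      Nat.testBit_eq_false_of_lt h1, Nat.testBit_eq_false_of_lt (by omega)]
    rfl

lemma eps_eq_zero {k n : ℕ} (h : n < 2^k) : eps k n = 0 := by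
  simp [eps, Nat.testBit_eq_false_of_lt h]

lemma lt_two_pow_of_le {n K : ℕ} (h : n + 1 ≤ K) : n < 2^K :=
  lt_of_lt_of_le (Nat.lt_two_pow_self (n := n)) (Nat.pow_le_pow_right (by norm_num) (by omega))

/-- walsh with exponent summed over any large enough range. -/
lemma walsh_eq_pow {n K : ℕ} (hK : n < 2^K) (x : ℝ) :
    walsh n x = (-1 : ℝ) ^ (∑ k ∈ Finset.range K, eps k n * digit k x) := by
  unfold walsh
  congr 1
  rcases le_total (n+1) K with h | h
  · exact (Finset.sum_subset (Finset.range_subset_range.2 h) (fun k _ hk => by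
      rw [eps_eq_zero (lt_two_pow_of_le (by simpa using hk)), zero_mul]))
  · exact (Finset.sum_subset (Finset.range_subset_range.2 h) (fun k hk hk2 => by
      have : K ≤ k := by simpa using hk2
      rw [eps_eq_zero (lt_of_lt_of_le hK (Nat.pow_le_pow_right (by norm_num) this)), zero_mul])).symm

lemma neg_one_pow_congr {a b : ℕ} (h : a % 2 = b % 2) : ((-1:ℝ))^a = (-1)^b := by
  rcases Nat.even_or_odd a with ha | ha
  · have hb : Even b := by rw [Nat.even_iff] at *; omega
    rw [ha.neg_one_pow, hb.neg_one_pow]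
  · have hb : Odd b := by rw [Nat.odd_iff] at *; omega
    rw [ha.neg_one_pow, hb.neg_one_pow]

lemma walsh_mul (m n : ℕ) (x : ℝ) : walsh m x * walsh n x = walsh (m ^^^ n) x := by
  set K := max (max m n) (m ^^^ n) + 1 with hKdef
  have hm : m < 2^K := lt_two_pow_of_le (by omega)
  have hn : n < 2^K := lt_two_pow_of_le (by omega)
  have hx : m ^^^ n < 2^K := lt_two_pow_of_le (by omega)
  rw [walsh_eq_pow hm, walsh_eq_pow hn, walsh_eq_pow hx, ← pow_add]
  apply neg_one_pow_congr
  rw [← Finset.sum_add_distrib, Finset.sum_nat_mod]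
  conv_rhs => rw [Finset.sum_nat_mod]
  congr 1
  apply Finset.sum_congr rfl
  intro k _
  simp only [eps, Nat.testBit_xor]
  cases hb1 : m.testBit k <;> cases hb2 : n.testBit k <;> simp <;> omega

lemma walsh_zero (x : ℝ) : walsh 0 x = 1 := by
  simp [walsh, eps]

lemma walsh_eq_one_or (n : ℕ) (x : ℝ) : walsh n x = 1 ∨ walsh n x = -1 := by
  unfold walsh
  rcases Nat.even_or_odd (∑ k ∈ Finset.range (n + 1), eps k n * digit k x) with h | h
  · left; exact h.neg_one_pow
  · right; exact h.neg_one_pow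

lemma abs_walsh (n : ℕ) (x : ℝ) : |walsh n x| = 1 := by
  rcases walsh_eq_one_or n x with h | h <;> rw [h] <;> norm_num


/-- On the dyadic piece `[j/2^K, (j+1)/2^K)` the `k`-th digit (`k < K`) is
the `(K-1-k)`-th binary digit of `j`. -/
lemma digit_piece {K j k : ℕ} (hk : k < K) {x : ℝ}
    (hx1 : (j:ℝ)/2^K ≤ x) (hx2 : x < ((j:ℝ)+1)/2^K) :
    digit k x = (j / 2^(K-1-k)) % 2 := by
  set d := K - 1 - k with hd
  have hKd : K = (k+1) + d := by omega
  set qq := j / 2^d with hqq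
  set r := j % 2^d with hr
  have hjr : j = 2^d * qq + r := (Nat.div_add_mod j (2^d)).symm
  have hrlt : r < 2^d := Nat.mod_lt _ (by positivity)
  have h2K : (2:ℝ)^K = 2^(k+1) * 2^d := by rw [hKd]; ring
  have hpos : (0:ℝ) < 2^(k+1) := by positivity
  have hdpos : (0:ℝ) < 2^d := by positivity
  have hfloor : ⌊x * 2^(k+1)⌋ = (qq : ℤ) := by
    rw [Int.floor_eq_iff]
    constructor
    · calc (qq:ℝ) ≤ (qq:ℝ) + r/2^d := le_add_of_nonneg_right (by positivity)
        _ = (j:ℝ)/2^K * 2^(k+1) := by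
            rw [h2K]; field_simp; rw [hjr]; push_cast; ring
        _ ≤ x * 2^(k+1) := by
            apply mul_le_mul_of_nonneg_right hx1 (le_of_lt hpos)
    · calc x * 2^(k+1) < ((j:ℝ)+1)/2^K * 2^(k+1) := by
            apply mul_lt_mul_of_pos_right hx2 hpos
        _ = (qq:ℝ) + ((r:ℝ)+1)/2^d := by
            rw [h2K]; field_simp; rw [hjr]; push_cast; ring
        _ ≤ (qq:ℝ) + 1 := by
            have : ((r:ℝ)+1)/2^d ≤ 1 := by
              rw [div_le_one hdpos]
              have : (r:ℝ)+1 ≤ (2:ℝ)^d := by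
                have := hrlt; push_cast; exact_mod_cast Nat.succ_le_of_lt hrlt
              linarith
            linarith
  unfold digit
  rw [hfloor]
  norm_num

lemma measurable_digit (k : ℕ) : Measurable (digit k) := by
  have h1 : Measurable fun x : ℝ => ⌊x * 2^(k+1)⌋ :=
    Int.measurable_floor.comp (measurable_id.mul_const _)
  exact (measurable_from_top (f := fun z : ℤ => z.toNat % 2)).comp h1


-- C part
lemma measurable_walsh (n : ℕ) : Measurable (walsh n) := by
  have h : Measurable fun x => ∑ k ∈ Finset.range (n + 1), eps k n * digit k x := by
    apply Finset.measurable_sum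
    intro k _
    exact (measurable_from_top (f := fun m : ℕ => eps k n * m)).comp (measurable_digit k)
  exact (measurable_from_top (f := fun e : ℕ => ((-1:ℝ))^e)).comp h

lemma integrable_of_bounded {g : ℝ → ℝ} {s : Set ℝ} (hvol : volume s ≠ ⊤)
    (hm : Measurable g) (c : ℝ) (hc : ∀ x, |g x| ≤ c) :
    Integrable g (volume.restrict s) := by
  haveI : IsFiniteMeasure (volume.restrict s) :=
    ⟨by rw [Measure.restrict_apply_univ]; exact lt_top_iff_ne_top.2 hvol⟩
  exact (integrable_const c).mono' hm.aestronglyMeasurable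
    (Filter.Eventually.of_forall (by simpa [Real.norm_eq_abs] using hc))

lemma intervalIntegrable_walsh {n : ℕ} {a b : ℝ} :
    IntervalIntegrable (walsh n) volume a b := by
  rw [intervalIntegrable_iff]
  exact integrable_of_bounded (by simpa [Set.uIoc] using measure_Ioc_lt_top.ne)
    (measurable_walsh n) 1 (fun x => (abs_walsh n x).le)

lemma walsh_two_pow (L : ℕ) (x : ℝ) : walsh (2^L) x = (-1 : ℝ)^(digit L x) := by
  unfold walsh
  congr 1
  rw [Finset.sum_eq_single L]
  · simp [eps, Nat.testBit_two_pow_self]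
  · intro k _ hkL
    simp [eps, Nat.testBit_two_pow_of_ne (Ne.symm hkL)]
  · intro h
    exact absurd (Finset.mem_range.2 (Nat.lt_succ_of_le (Nat.le_of_lt (Nat.lt_two_pow_self (n := L))))) h

/-- walsh n is determined by digits below K when n < 2^K -/
lemma walsh_congr {n K : ℕ} (hK : n < 2^K) {x y : ℝ}
    (h : ∀ k < K, digit k x = digit k y) : walsh n x = walsh n y := by
  rw [walsh_eq_pow hK, walsh_eq_pow hK]
  congr 1
  exact Finset.sum_congr rfl fun k hk => by rw [h k (Finset.mem_range.1 hk)]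

/-- Integral of walsh (2^L) over an odd/even half piece at level L+1. -/
lemma integral_walsh_two_pow_piece (L m : ℕ) :
    ∫ t in Set.Ioo ((m:ℝ)/2^(L+1)) (((m:ℝ)+1)/2^(L+1)), walsh (2^L) t
      = ((-1:ℝ))^(m % 2) * (1/2^(L+1)) := by
  have hconst : ∀ t ∈ Set.Ioo ((m:ℝ)/2^(L+1)) (((m:ℝ)+1)/2^(L+1)),
      walsh (2^L) t = ((-1:ℝ))^(m % 2) := by
    intro t ht
    rw [walsh_two_pow, digit_piece (Nat.lt_succ_self L) ht.1.le ht.2]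
    norm_num
  rw [setIntegral_congr_fun measurableSet_Ioo hconst]
  rw [setIntegral_const, measureReal_def, Real.volume_Ioo, smul_eq_mul, mul_comm]
  congr 1
  have harea : ((m:ℝ)+1)/2^(L+1) - (m:ℝ)/2^(L+1) = 1/2^(L+1) := by ring
  rw [harea, ENNReal.toReal_ofReal (by positivity)]

/-- The main cancellation: ∫_{[0,1)} walsh n = 0 for n ≠ 0. -/
lemma integral_walsh_eq_zero {n : ℕ} (hn : n ≠ 0) :
    ∫ t in Set.Ico (0:ℝ) 1, walsh n t = 0 := by
  -- write n = 2^L + u with u < 2^L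
  obtain ⟨L, u, rfl, hu⟩ : ∃ L u, n = 2^L + u ∧ u < 2^L := by
    refine ⟨n.log2, n - 2^n.log2, by
      have := Nat.log2_self_le hn; omega, ?_⟩
    have h1 := Nat.log2_self_le hn
    have h2 := Nat.lt_log2_self (n := n)
    omega
  have key : ∀ j : ℕ, ∫ t in Set.Ioc ((j:ℝ)/2^L) (((j:ℝ)+1)/2^L), walsh (2^L + u) t = 0 := by
    intro j
    rw [integral_Ioc_eq_integral_Ioo]
    have hval : ∀ t ∈ Set.Ioo ((j:ℝ)/2^L) (((j:ℝ)+1)/2^L),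
        walsh (2^L + u) t = walsh u ((j:ℝ)/2^L + 1/2^(L+1)) * walsh (2^L) t := by
      intro t ht
      have hmul : walsh (2^L + u) t = walsh (2^L) t * walsh u t := by
        rw [walsh_mul, two_pow_xor hu]
      rw [hmul, mul_comm]
      congr 1
      -- walsh u is constant on the piece: digits < L agree with midpoint
      apply walsh_congr hu
      intro k hk
      have hmid1 : (j:ℝ)/2^L ≤ (j:ℝ)/2^L + 1/2^(L+1) := le_add_of_nonneg_right (by positivity)
      have hmid2 : (j:ℝ)/2^L + 1/2^(L+1) < ((j:ℝ)+1)/2^L := by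
        have : (1:ℝ)/2^(L+1) < 1/2^L := by
          apply div_lt_div_of_pos_left one_pos (by positivity)
          exact pow_lt_pow_right₀ (by norm_num) (Nat.lt_succ_self L)
        rw [add_div]
        linarith
      rw [digit_piece hk ht.1.le ht.2, digit_piece hk hmid1 hmid2]
    rw [setIntegral_congr_fun measurableSet_Ioo hval]
    rw [integral_const_mul]
    -- split the piece into two halves at level L+1
    have hsplit : ∫ t in Set.Ioo ((j:ℝ)/2^L) (((j:ℝ)+1)/2^L), walsh (2^L) t = 0 := by
      have e1 : (j:ℝ)/2^L = ((2*j : ℕ):ℝ)/2^(L+1) := by push_cast; ring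
      have e2 : ((j:ℝ)+1)/2^L = (((2*j+1 : ℕ) : ℝ)+1)/2^(L+1) := by push_cast; ring
      have e3 : (((2*j : ℕ) : ℝ)+1)/2^(L+1) = ((2*j+1 : ℕ):ℝ)/2^(L+1) := by push_cast; ring
      rw [← integral_Ioc_eq_integral_Ioo, e1, e2]
      rw [← intervalIntegral.integral_of_le (by
        apply div_le_div_of_nonneg_right _ (by positivity)
        push_cast; linarith [(Nat.cast_nonneg j : (0:ℝ) ≤ j)])]
      rw [← intervalIntegral.integral_add_adjacent_intervals
        (b := (((2*j : ℕ):ℝ)+1)/2^(L+1)) intervalIntegrable_walsh intervalIntegrable_walsh]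
      rw [intervalIntegral.integral_of_le (by
          apply div_le_div_of_nonneg_right _ (by positivity); push_cast; linarith),
        intervalIntegral.integral_of_le (by
          rw [e3]
          apply div_le_div_of_nonneg_right _ (by positivity); push_cast; linarith)]
      rw [integral_Ioc_eq_integral_Ioo, integral_Ioc_eq_integral_Ioo]
      rw [integral_walsh_two_pow_piece]
      rw [e3, integral_walsh_two_pow_piece]
      have : (2*j) % 2 = 0 := by omega
      rw [this]
      have : (2*j+1) % 2 = 1 := by omega
      rw [this]
      ring
    rw [hsplit, mul_zero]
  -- sum the pieces
  rw [setIntegral_congr_set Ico_ae_eq_Ioc]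
  have hsum := intervalIntegral.sum_integral_adjacent_intervals
    (a := fun k : ℕ => (k:ℝ)/2^L) (n := 2^L) (μ := volume) (f := walsh (2^L+u))
    (fun k _ => intervalIntegrable_walsh)
  rw [intervalIntegral.integral_of_le (div_le_div_of_nonneg_right (Nat.cast_le.2 (Nat.zero_le _)) (by positivity))] at hsum
  have e0 : ((0:ℕ):ℝ)/2^L = 0 := by simp
  have e1 : ((2^L:ℕ):ℝ)/2^L = 1 := by
    rw [div_eq_one_iff_eq (by positivity)]; push_cast; ring
  rw [e0, e1] at hsum
  rw [← hsum]
  apply Finset.sum_eq_zero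
  intro j _
  rw [intervalIntegral.integral_of_le (by
    apply div_le_div_of_nonneg_right _ (by positivity); push_cast; linarith)]
  have ej : ((j+1 : ℕ):ℝ)/2^L = ((j:ℝ)+1)/2^L := by push_cast; ring
  rw [ej]
  exact key j


-- Part D
lemma integrable_walsh_mul_walsh (a b : ℕ) :
    Integrable (fun t => walsh a t * walsh b t) (volume.restrict (Set.Ico (0:ℝ) 1)) := by
  apply integrable_of_bounded (by simp) ((measurable_walsh a).mul (measurable_walsh b)) 1
  intro x
  rw [Pi.mul_apply, abs_mul, abs_walsh, abs_walsh, mul_one]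

lemma integral_walsh_mul_walsh (a b : ℕ) :
    ∫ t in Set.Ico (0:ℝ) 1, walsh a t * walsh b t = if a = b then 1 else 0 := by
  have h : ∀ t, walsh a t * walsh b t = walsh (a ^^^ b) t := fun t => walsh_mul a b t
  simp only [h]
  by_cases hab : a = b
  · subst hab
    simp only [Nat.xor_self, if_pos rfl]
    simp only [walsh_zero]
    rw [setIntegral_const, measureReal_def, Real.volume_Ico, smul_eq_mul]
    norm_num
  · rw [if_neg hab]
    exact integral_walsh_eq_zero (by simpa [Nat.xor_eq_zero_iff] using hab)

lemma walsh_two_pow_add {l u : ℕ} (h : u < 2^l) (x : ℝ) :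
    walsh (2^l + u) x = walsh (2^l) x * walsh u x := by
  rw [walsh_mul, two_pow_xor h]

lemma D_two_pow_add {l i : ℕ} (h : i ≤ 2^l) (x : ℝ) :
    D (2^l + i) x = D (2^l) x + walsh (2^l) x * D i x := by
  unfold D
  rw [Finset.range_eq_Ico, ← Finset.sum_Ico_consecutive _ (Nat.zero_le (2^l)) (Nat.le_add_right _ i),
    ← Finset.range_eq_Ico]
  congr 1
  · rw [Finset.sum_Ico_eq_sum_range]
    simp only [Nat.add_sub_cancel_left]
    rw [Finset.mul_sum]
    apply Finset.sum_congr rfl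
    intro u hu
    exact walsh_two_pow_add (lt_of_lt_of_le (Finset.mem_range.1 hu) h) x

lemma D_two_pow_succ (M : ℕ) (x : ℝ) :
    D (2^(M+1)) x = (1 + walsh (2^M) x) * D (2^M) x := by
  have h : 2^(M+1) = 2^M + 2^M := by ring
  rw [h, D_two_pow_add (le_refl _), add_mul, one_mul]

-- digits on the fundamental intervals
lemma digit_IN {N k : ℕ} (hk : k < N) {x : ℝ} (hx : x ∈ Set.Ico (0:ℝ) (1/2^N)) :
    digit k x = 0 := by
  have := digit_piece (j := 0) hk (by simpa using hx.1) (by simpa using hx.2)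
  simpa using this

lemma digit_Jl_self {l : ℕ} {x : ℝ} (hx : x ∈ Set.Ico ((1:ℝ)/2^(l+1)) (1/2^l)) :
    digit l x = 1 := by
  have h2 : x < ((1:ℝ)+1)/2^(l+1) := by
    have : ((1:ℝ)+1)/2^(l+1) = 1/2^l := by
      rw [pow_succ]; ring
    rw [this]; exact hx.2
  have := digit_piece (j := 1) (Nat.lt_succ_self l) (by simpa using hx.1) (by push_cast; exact h2)
  simpa using this

lemma digit_Jl_lt {l k : ℕ} (hk : k < l) {x : ℝ}
    (hx : x ∈ Set.Ico ((1:ℝ)/2^(l+1)) (1/2^l)) : digit k x = 0 := by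
  have h2 : x < ((1:ℝ)+1)/2^(l+1) := by
    have : ((1:ℝ)+1)/2^(l+1) = 1/2^l := by rw [pow_succ]; ring
    rw [this]; exact hx.2
  have := digit_piece (j := 1) (Nat.lt_succ_of_lt hk) (by simpa using hx.1) (by push_cast; exact h2)
  rw [this]
  have hlt : (1:ℕ) < 2^(l+1-1-k) := by
    have : 1 ≤ l - k := by omega
    calc (1:ℕ) < 2^1 := by norm_num
    _ ≤ 2^(l+1-1-k) := Nat.pow_le_pow_right (by norm_num) (by omega)
  rw [Nat.div_eq_of_lt hlt]

lemma walsh_eq_one_of_digits {n K : ℕ} (hn : n < 2^K) {x : ℝ}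
    (h : ∀ k < K, digit k x = 0) : walsh n x = 1 := by
  rw [walsh_eq_pow hn]
  have : ∑ k ∈ Finset.range K, eps k n * digit k x = 0 := by
    apply Finset.sum_eq_zero
    intro k hk
    rw [h k (Finset.mem_range.1 hk), mul_zero]
  rw [this, pow_zero]

lemma D_eq_self_IN {N j : ℕ} (hj : j ≤ 2^N) {x : ℝ}
    (hx : ∀ k < N, digit k x = 0) : D j x = j := by
  unfold D
  rw [Finset.sum_congr rfl (fun k hk => walsh_eq_one_of_digits
    (lt_of_lt_of_le (Finset.mem_range.1 hk) hj) hx)]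
  simp

lemma D_Jl_low {l j : ℕ} (hj : j ≤ 2^l) {x : ℝ}
    (hx : x ∈ Set.Ico ((1:ℝ)/2^(l+1)) (1/2^l)) : D j x = j :=
  D_eq_self_IN hj (fun k hk => digit_Jl_lt hk hx)

lemma D_Jl_high {l i : ℕ} (hi : i ≤ 2^l) {x : ℝ}
    (hx : x ∈ Set.Ico ((1:ℝ)/2^(l+1)) (1/2^l)) :
    D (2^l + i) x = (2^l : ℝ) - i := by
  rw [D_two_pow_add hi, D_Jl_low (le_refl _) hx, D_Jl_low hi hx,
    walsh_two_pow, digit_Jl_self hx]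
  push_cast
  ring

lemma D_two_pow_nonneg (M : ℕ) (x : ℝ) : 0 ≤ D (2^M) x := by
  induction M with
  | zero => simp [D, walsh_zero]
  | succ M ih =>
    rw [D_two_pow_succ]
    apply mul_nonneg _ ih
    rcases abs_le.1 (le_of_eq (abs_walsh (2^M) x)) with ⟨h1, _⟩
    linarith

lemma D_two_pow_zero_of_Jl {l M : ℕ} (hM : l < M) {x : ℝ}
    (hx : x ∈ Set.Ico ((1:ℝ)/2^(l+1)) (1/2^l)) : D (2^M) x = 0 := by
  induction M with
  | zero => omega
  | succ M ih =>
    rw [D_two_pow_succ]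
    rcases Nat.lt_succ_iff_lt_or_eq.1 hM with h | h
    · rw [ih h, mul_zero]
    · subst h
      rw [walsh_two_pow, digit_Jl_self hx]
      norm_num

lemma exists_scale {N : ℕ} {x : ℝ} (h1 : (1:ℝ)/2^N ≤ x) (h2 : x < 1) :
    ∃ l < N, x ∈ Set.Ico ((1:ℝ)/2^(l+1)) (1/2^l) := by
  induction N with
  | zero => simp at h1; linarith
  | succ N ih =>
    by_cases h : (1:ℝ)/2^N ≤ x
    · obtain ⟨l, hl, hx⟩ := ih h
      exact ⟨l, Nat.lt_succ_of_lt hl, hx⟩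
    · exact ⟨N, Nat.lt_succ_self N, h1, not_le.1 h⟩

lemma paley {N : ℕ} {x : ℝ} (hx : x ∈ Set.Ico (0:ℝ) 1) :
    D (2^N) x = if x < 1/2^N then (2^N : ℝ) else 0 := by
  by_cases h : x < 1/2^N
  · rw [if_pos h]
    have := D_eq_self_IN (le_refl (2^N)) (fun k hk => digit_IN hk ⟨hx.1, h⟩)
    rw [this]
    push_cast; ring
  · rw [if_neg h]
    obtain ⟨l, hl, hxl⟩ := exists_scale (not_lt.1 h) hx.2
    exact D_two_pow_zero_of_Jl hl hxl

-- the counterexample function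
def fN (N : ℕ) : ℝ → ℝ := fun x => D (2^(N+1)) x - D (2^N) x

lemma fN_eq (N : ℕ) (x : ℝ) :
    fN N x = ∑ i ∈ Finset.Ico (2^N) (2^(N+1)), walsh i x := by
  unfold fN D
  rw [eq_comm, Finset.sum_Ico_eq_sub _ (Nat.pow_le_pow_right (by norm_num) (Nat.le_succ N))]

lemma fN_coeff (N i : ℕ) :
    (∫ t in Set.Ico (0:ℝ) 1, fN N t * walsh i t)
      = if i ∈ Finset.Ico (2^N) (2^(N+1)) then 1 else 0 := by
  have : ∀ t, fN N t * walsh i t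
      = ∑ u ∈ Finset.Ico (2^N) (2^(N+1)), walsh u t * walsh i t := by
    intro t
    rw [fN_eq, Finset.sum_mul]
  simp only [this]
  rw [integral_finset_sum _ (fun u _ => integrable_walsh_mul_walsh u i)]
  rw [Finset.sum_congr rfl (fun u _ => integral_walsh_mul_walsh u i)]
  rw [Finset.sum_ite_eq' _ i (fun _ => (1:ℝ))]

lemma integrable_fN (N : ℕ) : Integrable (fN N) (volume.restrict (Set.Ico (0:ℝ) 1)) := by
  apply integrable_of_bounded (by simp) _ (2^(N+1))
  · intro x
    rw [fN_eq]
    calc |∑ i ∈ Finset.Ico (2^N) (2^(N+1)), walsh i x|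
        ≤ ∑ i ∈ Finset.Ico (2^N) (2^(N+1)), |walsh i x| := Finset.abs_sum_le_sum_abs _ _
      _ = ∑ i ∈ Finset.Ico (2^N) (2^(N+1)), 1 := by
          exact Finset.sum_congr rfl fun i _ => abs_walsh i x
      _ ≤ 2^(N+1) := by
          rw [Finset.sum_const, Nat.card_Ico, nsmul_eq_mul, mul_one]
          have : 2^(N+1) - 2^N ≤ 2^(N+1) := Nat.sub_le _ _
          exact_mod_cast this
  · have : fN N = fun x => D (2^(N+1)) x - D (2^N) x := rfl
    rw [this]
    apply Measurable.sub <;>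
      exact Finset.measurable_sum _ (fun i _ => measurable_walsh i)

/-- master formula for the partial sums of fN -/
lemma S_fN (N k : ℕ) (x : ℝ) :
    S (fN N) k x = walsh (2^N) x * D (min k (2^(N+1)) - 2^N) x := by
  unfold S
  simp only [fN_coeff]
  have h1 : ∀ i ∈ Finset.range k,
      (if i ∈ Finset.Ico (2^N) (2^(N+1)) then (1:ℝ) else 0) * walsh i x
      = if i ∈ Finset.Ico (2^N) (2^(N+1)) then walsh i x else 0 := by
    intro i _
    split <;> simp
  rw [Finset.sum_congr rfl h1, Finset.sum_ite_mem]
  rw [Finset.range_eq_Ico, Finset.Ico_inter_Ico]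
  simp only [Nat.max_eq_right (Nat.zero_le _), Nat.min_comm]
  rw [Finset.sum_Ico_eq_sum_range]
  unfold D
  rw [Finset.mul_sum]
  apply Finset.sum_congr rfl
  intro u hu
  have hu2 : u < 2^N := by
    have := Finset.mem_range.1 hu
    have hmin : min (2^(N+1)) k - 2^N ≤ 2^N := by
      have : min (2^(N+1)) k ≤ 2^(N+1) := min_le_left _ _
      have h2 : (2:ℕ)^(N+1) = 2^N + 2^N := by ring
      omega
    omega
  rw [walsh_two_pow_add hu2]

/-- the logarithmic weights -/
def ql : ℕ → ℝ := fun j => if j = 0 then (1:ℝ) else 1 / (j:ℝ)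

lemma ql_nonneg (j : ℕ) : 0 ≤ ql j := by
  unfold ql; split <;> positivity

/-- harmonic sum -/
def H (M : ℕ) : ℝ := ∑ u ∈ Finset.Icc 1 M, (1:ℝ)/u

lemma H_nonneg (M : ℕ) : 0 ≤ H M := Finset.sum_nonneg fun u _ => by positivity

lemma H_split {a b : ℕ} (h : a ≤ b) :
    H b = H a + ∑ u ∈ Finset.Ico (a+1) (b+1), (1:ℝ)/(u:ℝ) := by
  unfold H
  rw [← Finset.Ico_add_one_right_eq_Icc, ← Finset.Ico_add_one_right_eq_Icc]
  exact (Finset.sum_Ico_consecutive _ (by omega) (by omega)).symm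

lemma H_two_pow_le (K : ℕ) : H (2^K) ≤ K + 1 := by
  induction K with
  | zero => simp [H]
  | succ K ih =>
    rw [H_split (Nat.pow_le_pow_right (by norm_num) (Nat.le_succ K))]
    have hbound : ∑ u ∈ Finset.Ico (2^K+1) (2^(K+1)+1 : ℕ), (1:ℝ)/(u:ℝ) ≤ 1 := by
      have hb2 : ∀ u ∈ Finset.Ico (2^K+1) (2^(K+1)+1 : ℕ), (1:ℝ)/(u:ℝ) ≤ 1/2^K := by
        intro u hu
        rw [Finset.mem_Ico] at hu
        have h1 : (0:ℝ) < 2^K := by positivity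
        have h2 : (2:ℝ)^K ≤ (u:ℝ) := by
          calc (2:ℝ)^K = ((2^K : ℕ):ℝ) := by push_cast; ring
            _ ≤ (u:ℝ) := by exact_mod_cast (by omega : 2^K ≤ u)
        exact one_div_le_one_div_of_le h1 h2
      calc ∑ u ∈ Finset.Ico (2^K+1) (2^(K+1)+1 : ℕ), (1:ℝ)/(u:ℝ)
          ≤ ∑ _u ∈ Finset.Ico (2^K+1) (2^(K+1)+1 : ℕ), (1:ℝ)/2^K := Finset.sum_le_sum hb2
        _ = ((2^(K+1)+1 - (2^K+1) : ℕ):ℝ) * (1/2^K) := by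
            rw [Finset.sum_const, Nat.card_Ico, nsmul_eq_mul]
        _ = ((2^K : ℕ):ℝ) * (1/2^K) := by
            have harg : (2:ℕ)^(K+1)+1 - (2^K+1) = 2^K := by
              have h2 : (2:ℕ)^(K+1) = 2^K + 2^K := by ring
              rw [h2]
              generalize (2:ℕ)^K = a
              omega
            rw [harg]
        _ = 1 := by
            push_cast
            field_simp
    push_cast at ih ⊢
    linarith

lemma H_two_pow_ge (l : ℕ) : 1 + l/2 ≤ H (2^l) := by
  induction l with
  | zero => simp [H]
  | succ l ih =>
    rw [H_split (Nat.pow_le_pow_right (by norm_num) (Nat.le_succ l))]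
    have hbound : (1:ℝ)/2 ≤ ∑ u ∈ Finset.Ico (2^l+1) (2^(l+1)+1 : ℕ), (1:ℝ)/(u:ℝ) := by
      have hb2 : ∀ u ∈ Finset.Ico (2^l+1) (2^(l+1)+1 : ℕ), (1:ℝ)/2^(l+1) ≤ (1:ℝ)/(u:ℝ) := by
        intro u hu
        rw [Finset.mem_Ico] at hu
        have hu0 : (0:ℝ) < (u:ℝ) := by
          have : 0 < u := by omega
          exact_mod_cast this
        have h2 : (u:ℝ) ≤ (2:ℝ)^(l+1) := by
          calc (u:ℝ) ≤ ((2^(l+1) : ℕ):ℝ) := by exact_mod_cast (by omega : u ≤ 2^(l+1))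
            _ = (2:ℝ)^(l+1) := by push_cast; ring
        exact one_div_le_one_div_of_le hu0 h2
      calc (1:ℝ)/2 = ((2^l : ℕ):ℝ) * ((1:ℝ)/2^(l+1)) := by
            push_cast [pow_succ]
            field_simp
        _ = ((2^(l+1)+1 - (2^l+1) : ℕ):ℝ) * ((1:ℝ)/2^(l+1)) := by
            have harg : (2:ℕ)^(l+1)+1 - (2^l+1) = 2^l := by
              have h2 : (2:ℕ)^(l+1) = 2^l + 2^l := by ring
              rw [h2]
              generalize (2:ℕ)^l = a
              omega
            rw [harg]
        _ = ∑ _u ∈ Finset.Ico (2^l+1) (2^(l+1)+1 : ℕ), (1:ℝ)/2^(l+1) := by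
            rw [Finset.sum_const, Nat.card_Ico, nsmul_eq_mul]
        _ ≤ ∑ u ∈ Finset.Ico (2^l+1) (2^(l+1)+1 : ℕ), (1:ℝ)/(u:ℝ) := Finset.sum_le_sum hb2
    push_cast at ih ⊢
    linarith

lemma Q_ql_eq (n : ℕ) (hn : 1 ≤ n) : Q ql n = 1 + ∑ k ∈ Finset.Ico 1 n, (1:ℝ)/(k:ℝ) := by
  unfold Q
  rw [Finset.range_eq_Ico, ← Finset.sum_Ico_consecutive (fun k => ql k) (Nat.zero_le 1) hn]
  congr 1
  · simp [ql]
  · apply Finset.sum_congr rfl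
    intro k hk
    have : k ≠ 0 := by have := (Finset.mem_Ico.1 hk).1; omega
    simp [ql, this]

lemma Q_ql_one_le (n : ℕ) (hn : 1 ≤ n) : 1 ≤ Q ql n := by
  rw [Q_ql_eq n hn]
  have : 0 ≤ ∑ k ∈ Finset.Ico 1 n, (1:ℝ)/(k:ℝ) := Finset.sum_nonneg fun k _ => by positivity
  linarith

lemma Q_ql_le {n N : ℕ} (hn : 1 ≤ n) (h : n ≤ 2^(N+1)) : Q ql n ≤ N + 3 := by
  rw [Q_ql_eq n hn]
  have h1 : ∑ k ∈ Finset.Ico 1 n, (1:ℝ)/(k:ℝ) ≤ H (2^(N+1)) := by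
    apply Finset.sum_le_sum_of_subset_of_nonneg
    · intro k hk
      rw [Finset.mem_Ico] at hk
      rw [Finset.mem_Icc]
      omega
    · intro k _ _; positivity
  have h2 := H_two_pow_le (N+1)
  push_cast at h2 ⊢
  linarith

/-- The key kernel evaluation: value of the Nörlund mean of `fN` at scale `l`. -/
lemma t_eval (N m : ℕ) (hm : 1 ≤ m) (hm2 : m ≤ 2^N) (x : ℝ) :
    t ql (2^N + m) (fN N) x
      = (1 / Q ql (2^N + m)) * (walsh (2^N) x *
          ∑ j ∈ Finset.Icc 1 m, ql (m - j) * D j x) := by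
  unfold t
  congr 1
  have hIcc0 : Finset.Icc 1 (2^N + m) = Finset.Ico 1 (2^N+m+1) := by
    rw [Finset.Ico_add_one_right_eq_Icc]
  have hsplit : ∑ k ∈ Finset.Icc 1 (2^N + m), ql (2^N + m - k) * S (fN N) k x
      = ∑ k ∈ Finset.Ico 1 (2^N+1), ql (2^N + m - k) * S (fN N) k x
        + ∑ k ∈ Finset.Ico (2^N+1) (2^N+m+1), ql (2^N + m - k) * S (fN N) k x := by
    rw [hIcc0,
      ← Finset.sum_Ico_consecutive (fun k => ql (2^N + m - k) * S (fN N) k x)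
        (by omega : 1 ≤ 2^N+1) (by omega : 2^N+1 ≤ 2^N+m+1)]
  rw [hsplit]
  have hzero : ∑ k ∈ Finset.Ico 1 (2^N+1), ql (2^N + m - k) * S (fN N) k x = 0 := by
    apply Finset.sum_eq_zero
    intro k hk
    rw [Finset.mem_Ico] at hk
    have hk2 : k ≤ 2^N := by omega
    rw [S_fN]
    have hmin : min k (2^(N+1)) = k := by
      apply min_eq_left
      calc k ≤ 2^N := hk2
        _ ≤ 2^(N+1) := Nat.pow_le_pow_right (by norm_num) (by omega)
    rw [hmin, Nat.sub_eq_zero_of_le hk2]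
    simp [D]
  rw [hzero, zero_add]
  rw [Finset.sum_Ico_eq_sum_range]
  have hIcc : ∑ j ∈ Finset.Icc 1 m, ql (m - j) * D j x
      = ∑ j ∈ Finset.Ico 1 (m+1), ql (m - j) * D j x := by rw [Finset.Ico_add_one_right_eq_Icc]
  rw [hIcc, Finset.sum_Ico_eq_sum_range]
  have hcard : 2^N + m + 1 - (2^N + 1) = m + 1 - 1 := by omega
  rw [hcard]
  rw [Finset.mul_sum]
  apply Finset.sum_congr rfl
  intro j hj
  have hj2 : j < m := by simpa using Finset.mem_range.1 hj
  rw [S_fN]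
  have hmin : min (2^N + 1 + j) (2^(N+1)) = 2^N + 1 + j := by
    apply min_eq_left
    have : (2:ℕ)^(N+1) = 2^N + 2^N := by ring
    omega
  rw [hmin]
  have h1 : 2^N + 1 + j - 2^N = 1 + j := by omega
  have h2 : 2^N + m - (2^N + 1 + j) = m - (1+j) := by omega
  rw [h1, h2]
  ring

/-- kernel sum lower bound on J_l -/
lemma V_bound (l : ℕ) {x : ℝ} (hx : x ∈ Set.Ico ((1:ℝ)/2^(l+1)) (1/2^l)) :
    (2^l : ℝ) * (l + 2) / 2
      ≤ ∑ j ∈ Finset.Icc 1 (2^l + 1), ql (2^l + 1 - j) * D j x := by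
  set M := 2^l with hM
  have hM1 : 1 ≤ M := Nat.one_le_two_pow
  have hMcast : (M:ℝ) = 2^l := by rw [hM]; push_cast; ring
  have hMR : (1:ℝ) ≤ M := by exact_mod_cast hM1
  have hsplit : ∑ j ∈ Finset.Icc 1 (M + 1), ql (M + 1 - j) * D j x
      = ∑ j ∈ Finset.Icc 1 M, ql (M + 1 - j) * D j x + ql 0 * D (M+1) x := by
    rw [Finset.sum_Icc_succ_top (by omega)]
    have h0 : M + 1 - (M+1) = 0 := by omega
    rw [h0]
  have hlast : ql 0 * D (M+1) x = (2^l:ℝ) - 1 := by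
    have hD : D (M+1) x = (2^l:ℝ) - 1 := by
      have := D_Jl_high (l := l) (i := 1) (by omega) hx
      simpa using this
    simp [ql, hD]
  have hmain : ∑ j ∈ Finset.Icc 1 M, ql (M + 1 - j) * D j x
      = (∑ u ∈ Finset.Icc 1 M, ((M:ℝ) + 1) * (1/u)) - M := by
    have step1 : ∑ j ∈ Finset.Icc 1 M, ql (M + 1 - j) * D j x
        = ∑ j ∈ Finset.Icc 1 M, (j:ℝ) / ((M + 1 - j : ℕ):ℝ) := by
      apply Finset.sum_congr rfl
      intro j hj
      rw [Finset.mem_Icc] at hj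
      have hne : M + 1 - j ≠ 0 := by omega
      rw [D_Jl_low (by omega) hx]
      simp only [ql, if_neg hne]
      ring
    have step2 : ∑ j ∈ Finset.Icc 1 M, (j:ℝ) / ((M + 1 - j : ℕ):ℝ)
        = ∑ u ∈ Finset.Icc 1 M, ((M + 1 - u : ℕ):ℝ) / (u:ℝ) := by
      apply Finset.sum_nbij' (fun j => M + 1 - j) (fun u => M + 1 - u)
      · intro a ha; rw [Finset.mem_Icc] at *; omega
      · intro a ha; rw [Finset.mem_Icc] at *; omega
      · intro a ha; rw [Finset.mem_Icc] at ha; omega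
      · intro a ha; rw [Finset.mem_Icc] at ha; omega
      · intro a ha
        rw [Finset.mem_Icc] at ha
        have : M + 1 - (M + 1 - a) = a := by omega
        rw [this]
    have step3 : ∑ u ∈ Finset.Icc 1 M, ((M + 1 - u : ℕ):ℝ) / (u:ℝ)
        = ∑ u ∈ Finset.Icc 1 M, (((M:ℝ) + 1) * (1/u) - 1) := by
      apply Finset.sum_congr rfl
      intro u hu
      rw [Finset.mem_Icc] at hu
      have hu0 : (u:ℝ) ≠ 0 := by exact_mod_cast (by omega : u ≠ 0)
      have hc : ((M + 1 - u : ℕ):ℝ) = (M:ℝ) + 1 - u := by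
        push_cast [Nat.cast_sub (by omega : u ≤ M + 1)]
        ring
      rw [hc]
      field_simp
    rw [step1, step2, step3, Finset.sum_sub_distrib, Finset.sum_const, Nat.card_Icc]
    simp
  have hH : (∑ u ∈ Finset.Icc 1 M, ((M:ℝ) + 1) * (1/u)) = ((M:ℝ)+1) * H M := by
    unfold H
    rw [Finset.mul_sum]
  have hHge : 1 + (l:ℝ)/2 ≤ H M := H_two_pow_ge l
  have hHM : ((M:ℝ)+1) * (1 + (l:ℝ)/2) ≤ ((M:ℝ)+1) * H M :=
    mul_le_mul_of_nonneg_left hHge (by linarith)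
  have hexp : ((M:ℝ)+1) * (1 + (l:ℝ)/2) = (M:ℝ) + (M:ℝ)*((l:ℝ)/2) + 1 + (l:ℝ)/2 := by ring
  have hl0 : (0:ℝ) ≤ (l:ℝ) := Nat.cast_nonneg l
  have htarget : (2^l:ℝ) * ((l:ℝ) + 2) / 2 = (M:ℝ)*((l:ℝ)/2) + (M:ℝ) := by
    rw [← hMcast]; ring
  rw [hsplit, hmain, hlast, hH, htarget, ← hMcast]
  linarith


lemma two_pow_succ_sub (N : ℕ) : 2^(N+1) - 2^N = 2^N := by
  have h3 : (2:ℕ)^(N+1) = 2^N + 2^N := by ring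
  rw [h3]
  generalize (2:ℕ)^N = a
  omega

-- F1 : maximal dyadic partial sums of fN
lemma maxS_fN (N : ℕ) (x : ℝ) : maxS (fN N) x = ENNReal.ofReal (D (2^N) x) := by
  have hS : ∀ m : ℕ, |S (fN N) (2^m) x| = if N < m then D (2^N) x else 0 := by
    intro m
    rw [S_fN]
    by_cases h : N < m
    · have hmin : min (2^m) (2^(N+1)) = 2^(N+1) :=
        min_eq_right (Nat.pow_le_pow_right (by norm_num) h)
      have hsub : 2^(N+1) - 2^N = 2^N := two_pow_succ_sub N
      rw [if_pos h, hmin, hsub, abs_mul, abs_walsh, one_mul,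
        abs_of_nonneg (D_two_pow_nonneg N x)]
    · have hmin : min (2^m) (2^(N+1)) = 2^m :=
        min_eq_left (Nat.pow_le_pow_right (by norm_num) (by omega))
      have hsub : 2^m - 2^N = 0 := by
        apply Nat.sub_eq_zero_of_le
        exact Nat.pow_le_pow_right (by norm_num) (by omega)
      rw [if_neg h, hmin, hsub]
      simp [D]
  apply le_antisymm
  · apply iSup_le
    intro m
    rw [hS m]
    split
    · exact le_refl _
    · simp
  · have := le_iSup (fun m => ENNReal.ofReal |S (fN N) (2^m) x|) (N+1)
    rw [hS (N+1), if_pos (Nat.lt_succ_self N)] at this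
    exact this

-- F2 : the Hp integral
lemma lint_maxS (N : ℕ) {p : ℝ} (hp : 0 < p) :
    ∫⁻ x in Set.Ico (0:ℝ) 1, maxS (fN N) x ^ p
      = (ENNReal.ofReal ((2:ℝ)^N))^p * ENNReal.ofReal ((1:ℝ)/2^N) := by
  have hcong : ∀ x ∈ Set.Ico (0:ℝ) 1, maxS (fN N) x ^ p
      = Set.indicator (Set.Ico (0:ℝ) (1/2^N))
          (fun _ => (ENNReal.ofReal ((2:ℝ)^N))^p) x := by
    intro x hx
    rw [maxS_fN, paley hx]
    by_cases h : x < 1/2^N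
    · rw [if_pos h, Set.indicator_of_mem (Set.mem_Ico.2 ⟨hx.1, h⟩)]
    · rw [if_neg h, Set.indicator_of_notMem (fun hmem => h hmem.2)]
      simp [ENNReal.zero_rpow_of_pos hp]
  rw [setLIntegral_congr_fun measurableSet_Ico hcong]
  rw [lintegral_indicator measurableSet_Ico]
  rw [Measure.restrict_restrict measurableSet_Ico, setLIntegral_const]
  have hsub : Set.Ico (0:ℝ) (1/2^N) ∩ Set.Ico (0:ℝ) 1 = Set.Ico (0:ℝ) (1/2^N) := by
    apply Set.inter_eq_left.2
    apply Set.Ico_subset_Ico_right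
    calc (1:ℝ)/2^N ≤ 1/1 := by
          apply div_le_div_of_nonneg_left (by norm_num) (by norm_num) (one_le_pow₀ (by norm_num))
      _ = 1 := by norm_num
  rw [hsub, Real.volume_Ico, sub_zero]

lemma HpNorm_fN (N : ℕ) {p : ℝ} (hp : 0 < p) :
    HpNorm p (fN N)
      = ((ENNReal.ofReal ((2:ℝ)^N))^p * ENNReal.ofReal ((1:ℝ)/2^N))^(1/p) := by
  unfold HpNorm
  rw [lint_maxS N hp]

lemma HpNorm_fN_lt_top (N : ℕ) {p : ℝ} (hp : 0 < p) : HpNorm p (fN N) < ⊤ := by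
  rw [HpNorm_fN N hp]
  apply ENNReal.rpow_lt_top_of_nonneg (by positivity)
  apply ENNReal.mul_ne_top
  · exact (ENNReal.rpow_lt_top_of_nonneg hp.le ENNReal.ofReal_ne_top).ne
  · exact ENNReal.ofReal_ne_top

-- F4 : pointwise lower bound for tstar
lemma tstar_lower {N l : ℕ} (hl : l < N) {x : ℝ}
    (hx : x ∈ Set.Ico ((1:ℝ)/2^(l+1)) (1/2^l)) :
    ENNReal.ofReal (((2:ℝ)^l * ((l:ℝ)+2)/2) / ((N:ℝ)+3)) ≤ tstar ql (fN N) x := by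
  set m := 2^l + 1 with hm
  have hm1 : 1 ≤ m := Nat.succ_le_succ (Nat.zero_le _)
  have hm2 : m ≤ 2^N := by
    have h1 : (2:ℕ)^(l+1) ≤ 2^N := Nat.pow_le_pow_right (by norm_num) (by omega)
    have h2 : (2:ℕ)^(l+1) = 2^l + 2^l := by ring
    rw [hm]
    rw [h2] at h1
    have h3 : (1:ℕ) ≤ 2^l := Nat.one_le_two_pow
    generalize hgen : (2:ℕ)^l = a at h1 h3 ⊢
    omega
  set n := 2^N + m with hn
  have hn1 : 1 ≤ n := by omega
  have hnle : n ≤ 2^(N+1) := by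
    have h4 : (2:ℕ)^(N+1) = 2^N + 2^N := by ring
    rw [hn, h4]
    generalize (2:ℕ)^N = a at hm2 ⊢
    omega
  have hQ1 : 1 ≤ Q ql n := Q_ql_one_le n hn1
  have hQle : Q ql n ≤ (N:ℝ) + 3 := Q_ql_le hn1 hnle
  have hV := V_bound l hx
  set V := ∑ j ∈ Finset.Icc 1 m, ql (m - j) * D j x with hVdef
  have hVlow : (2:ℝ)^l * ((l:ℝ)+2)/2 ≤ V := hV
  have habs : |t ql n (fN N) x| = V / Q ql n := by
    rw [t_eval N m hm1 hm2 x, ← hVdef]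
    rw [abs_mul, abs_mul, abs_walsh]
    have hQpos : (0:ℝ) < Q ql n := by linarith
    have hV0 : (0:ℝ) ≤ V := le_trans (by positivity) hVlow
    rw [abs_of_nonneg (by positivity : (0:ℝ) ≤ 1 / Q ql n), abs_of_nonneg hV0]
    ring
  have hfrac : ((2:ℝ)^l * ((l:ℝ)+2)/2) / ((N:ℝ)+3) ≤ V / Q ql n := by
    apply div_le_div₀ (le_trans (by positivity) hVlow) hVlow (by linarith) hQle
  calc ENNReal.ofReal (((2:ℝ)^l * ((l:ℝ)+2)/2) / ((N:ℝ)+3))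
      ≤ ENNReal.ofReal |t ql n (fN N) x| := by
        rw [habs]; exact ENNReal.ofReal_le_ofReal hfrac
    _ ≤ tstar ql (fN N) x := by
        unfold tstar
        exact le_biSup (fun k => ENNReal.ofReal |t ql k (fN N) x|) (Set.mem_Ici.2 hn1)

-- F5 : lintegral lower bound
lemma lint_tstar (N : ℕ) {p : ℝ} (hp : 0 < p) :
    ∑ l ∈ Finset.range N,
        (ENNReal.ofReal (((2:ℝ)^l * ((l:ℝ)+2)/2) / ((N:ℝ)+3)))^p
          * ENNReal.ofReal ((1:ℝ)/2^(l+1))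
      ≤ ∫⁻ x in Set.Ico (0:ℝ) 1, tstar ql (fN N) x ^ p := by
  set J : ℕ → Set ℝ := fun l => Set.Ico ((1:ℝ)/2^(l+1)) (1/2^l) with hJ
  have hJm : ∀ l, MeasurableSet (J l) := fun l => measurableSet_Ico
  have hJsub : ∀ l, J l ⊆ Set.Ico (0:ℝ) 1 := by
    intro l x hx
    constructor
    · have : (0:ℝ) < 1/2^(l+1) := by positivity
      linarith [hx.1]
    · calc x < 1/2^l := hx.2
        _ ≤ 1 := by
          rw [div_le_one (by positivity)]
          exact one_le_pow₀ (by norm_num)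
  have hdisjpair : ∀ a b : ℕ, a < b → Disjoint (J a) (J b) := by
    intro a b h
    apply Set.disjoint_left.2
    intro x hxa hxb
    have h1 : x < (1:ℝ)/2^(a+1) := by
      calc x < 1/2^b := hxb.2
        _ ≤ 1/2^(a+1) := by
          apply div_le_div_of_nonneg_left (by norm_num) (by positivity)
          exact pow_le_pow_right₀ (by norm_num) (by omega)
    exact absurd hxa.1 (not_le.2 h1)
  have hdisj : (↑(Finset.range N) : Set ℕ).PairwiseDisjoint J := by
    intro a _ b _ hab
    rcases lt_or_gt_of_ne hab with h | h
    · exact hdisjpair a b h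
    · exact (hdisjpair b a h).symm
  calc ∑ l ∈ Finset.range N,
        (ENNReal.ofReal (((2:ℝ)^l * ((l:ℝ)+2)/2) / ((N:ℝ)+3)))^p
          * ENNReal.ofReal ((1:ℝ)/2^(l+1))
      = ∑ l ∈ Finset.range N,
          (ENNReal.ofReal (((2:ℝ)^l * ((l:ℝ)+2)/2) / ((N:ℝ)+3)))^p * volume (J l) := by
        apply Finset.sum_congr rfl
        intro l _
        congr 1
        rw [hJ]
        rw [Real.volume_Ico]
        congr 1
        have hd : (1:ℝ)/2^l - 1/2^(l+1) = 1/2^(l+1) := by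
          rw [pow_succ]
          field_simp
          ring
        rw [hd]
    _ ≤ ∑ l ∈ Finset.range N, ∫⁻ x in J l, tstar ql (fN N) x ^ p := by
        apply Finset.sum_le_sum
        intro l hl
        rw [← setLIntegral_const]
        apply setLIntegral_mono' (hJm l)
        intro x hx
        exact ENNReal.rpow_le_rpow (tstar_lower (Finset.mem_range.1 hl) hx) hp.le
    _ = ∫⁻ x in ⋃ l ∈ Finset.range N, J l, tstar ql (fN N) x ^ p :=
        (lintegral_biUnion_finset hdisj (fun l _ => hJm l) _).symm
    _ ≤ ∫⁻ x in Set.Ico (0:ℝ) 1, tstar ql (fN N) x ^ p := by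
        apply lintegral_mono_set
        intro x hx
        rw [Set.mem_iUnion₂] at hx
        obtain ⟨l, _, hxl⟩ := hx
        exact hJsub l hxl


end Walsh
/-- the maximal operator of the Nörlund logarithmic means
(`q_0 = 1`, `q_j = 1/j`) is not bounded from `H_p[0,1)` to `L^p[0,1)` for any
`p ∈ (0,1]`. -/
theorem logarithmic_maximal_not_bounded (p : ℝ) (hp1 : 0 < p) (hp2 : p ≤ 1) :
    ¬ ∃ C : ℝ≥0, ∀ f : ℝ → ℝ, MeasureTheory.Integrable f Walsh.μI →
        Walsh.HpNorm p f < ⊤ →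
        Walsh.LpNormE p
            (Walsh.tstar (fun j => if j = 0 then (1:ℝ) else 1 / (j:ℝ)) f)
          ≤ (C : ℝ≥0∞) * Walsh.HpNorm p f := by
  rintro ⟨C0, hC0⟩
  set C : ℝ := (C0 : ℝ) + 1 with hCdef
  have hC1 : (1:ℝ) ≤ C := by
    have := C0.coe_nonneg
    rw [hCdef]; linarith
  have hCpos : (0:ℝ) < C := by linarith
  have hql : (fun j : ℕ => if j = 0 then (1:ℝ) else 1 / (j:ℝ)) = Walsh.ql := rfl
  -- the master real inequality
  have master : ∀ N : ℕ,
      ∑ l ∈ Finset.range N,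
          (((2:ℝ)^l * ((l:ℝ)+2)/2) / ((N:ℝ)+3))^p * ((1:ℝ)/2^(l+1))
        ≤ C^p * (((2:ℝ)^N)^p * ((1:ℝ)/2^N)) := by
    intro N
    have happ := hC0 (Walsh.fN N) (Walsh.integrable_fN N) (Walsh.HpNorm_fN_lt_top N hp1)
    rw [hql] at happ
    have hE1 : (Walsh.LpNormE p (Walsh.tstar Walsh.ql (Walsh.fN N)))^p
        = ∫⁻ x in Set.Ico (0:ℝ) 1, Walsh.tstar Walsh.ql (Walsh.fN N) x ^ p := by
      unfold Walsh.LpNormE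
      rw [← ENNReal.rpow_mul, one_div_mul_cancel hp1.ne', ENNReal.rpow_one]
    have hE2 : (Walsh.HpNorm p (Walsh.fN N))^p
        = (ENNReal.ofReal ((2:ℝ)^N))^p * ENNReal.ofReal ((1:ℝ)/2^N) := by
      rw [Walsh.HpNorm_fN N hp1, ← ENNReal.rpow_mul, one_div_mul_cancel hp1.ne',
        ENNReal.rpow_one]
    have hC0le : (C0 : ℝ≥0∞) ≤ ENNReal.ofReal C := by
      rw [← ENNReal.ofReal_coe_nnreal]
      exact ENNReal.ofReal_le_ofReal (by rw [hCdef]; linarith)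
    have hchain : ∫⁻ x in Set.Ico (0:ℝ) 1, Walsh.tstar Walsh.ql (Walsh.fN N) x ^ p
        ≤ (ENNReal.ofReal C)^p
            * ((ENNReal.ofReal ((2:ℝ)^N))^p * ENNReal.ofReal ((1:ℝ)/2^N)) := by
      rw [← hE1, ← hE2]
      calc (Walsh.LpNormE p (Walsh.tstar Walsh.ql (Walsh.fN N)))^p
          ≤ ((C0 : ℝ≥0∞) * Walsh.HpNorm p (Walsh.fN N))^p :=
            ENNReal.rpow_le_rpow happ hp1.le
        _ = (C0 : ℝ≥0∞)^p * (Walsh.HpNorm p (Walsh.fN N))^p :=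
            ENNReal.mul_rpow_of_nonneg _ _ hp1.le
        _ ≤ (ENNReal.ofReal C)^p * (Walsh.HpNorm p (Walsh.fN N))^p :=
            mul_le_mul_left (ENNReal.rpow_le_rpow hC0le hp1.le) _
    have hlow := Walsh.lint_tstar N hp1
    have hfinal := le_trans hlow hchain
    -- convert both sides to ofReal
    have hβpos : ∀ l : ℕ, (0:ℝ) < ((2:ℝ)^l * ((l:ℝ)+2)/2) / ((N:ℝ)+3) := by
      intro l; positivity
    have hLHS : ∑ l ∈ Finset.range N,
          (ENNReal.ofReal (((2:ℝ)^l * ((l:ℝ)+2)/2) / ((N:ℝ)+3)))^p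
            * ENNReal.ofReal ((1:ℝ)/2^(l+1))
        = ENNReal.ofReal (∑ l ∈ Finset.range N,
            (((2:ℝ)^l * ((l:ℝ)+2)/2) / ((N:ℝ)+3))^p * ((1:ℝ)/2^(l+1))) := by
      rw [ENNReal.ofReal_sum_of_nonneg (fun l _ => by positivity)]
      apply Finset.sum_congr rfl
      intro l _
      rw [ENNReal.ofReal_mul (by positivity), ENNReal.ofReal_rpow_of_pos (hβpos l)]
    have hRHS : (ENNReal.ofReal C)^p
          * ((ENNReal.ofReal ((2:ℝ)^N))^p * ENNReal.ofReal ((1:ℝ)/2^N))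
        = ENNReal.ofReal (C^p * (((2:ℝ)^N)^p * ((1:ℝ)/2^N))) := by
      rw [ENNReal.ofReal_rpow_of_pos hCpos,
        ENNReal.ofReal_rpow_of_pos (by positivity : (0:ℝ) < (2:ℝ)^N),
        ← ENNReal.ofReal_mul (by positivity), ← ENNReal.ofReal_mul (by positivity)]
    rw [hLHS, hRHS] at hfinal
    exact (ENNReal.ofReal_le_ofReal_iff (by positivity)).1 hfinal
  -- split on p = 1 or p < 1
  rcases lt_or_eq_of_le hp2 with hplt | hpeq
  · -- case p < 1 : exponential beats polynomial
    set r : ℝ := (2:ℝ)^(1 - p) with hrdef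
    have hrpos : (0:ℝ) < r := Real.rpow_pos_of_pos (by norm_num) _
    have hr1 : 1 < r := by
      rw [hrdef, Real.one_lt_rpow_iff_of_pos (by norm_num)]
      left
      exact ⟨by norm_num, by linarith⟩
    have hkey : ∀ N : ℕ, 2 ≤ N → r^N ≤ 4*C*((N:ℝ)+3) := by
      intro N hN
      have hm := master N
      set s : ℝ := (N:ℝ)+3 with hsdef
      have hs3 : (3:ℝ) ≤ s := by
        have : (0:ℝ) ≤ (N:ℝ) := Nat.cast_nonneg N
        rw [hsdef]; linarith
      have hspos : (0:ℝ) < s := by linarith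
      have hterm : (((2:ℝ)^(1:ℕ) * (((1:ℕ):ℝ)+2)/2) / s)^p * ((1:ℝ)/2^((1:ℕ)+1))
          ≤ ∑ l ∈ Finset.range N,
            (((2:ℝ)^l * ((l:ℝ)+2)/2) / s)^p * ((1:ℝ)/2^(l+1)) :=
        Finset.single_le_sum (f := fun l : ℕ =>
          (((2:ℝ)^l * ((l:ℝ)+2)/2) / s)^p * ((1:ℝ)/2^(l+1)))
          (fun l _ => by positivity) (Finset.mem_range.2 (by omega))
      have hterm2 : ((3:ℝ)/s)^p * (1/4)
          ≤ C^p * (((2:ℝ)^N)^p * ((1:ℝ)/2^N)) := by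
        refine le_trans (le_of_eq ?_) (le_trans hterm hm)
        norm_num
      -- bound the pieces
      have h3p : (1:ℝ)/s ≤ ((3:ℝ)/s)^p := by
        have ha : s^p ≤ s := by
          have := Real.rpow_le_rpow_of_exponent_le (by linarith : (1:ℝ) ≤ s) hp2
          rwa [Real.rpow_one] at this
        have hb : (1:ℝ) ≤ (3:ℝ)^p := by
          calc (1:ℝ) = (3:ℝ)^(0:ℝ) := (Real.rpow_zero 3).symm
            _ ≤ (3:ℝ)^p := Real.rpow_le_rpow_of_exponent_le (by norm_num) hp1.le
        have hsp : (0:ℝ) < s^p := Real.rpow_pos_of_pos hspos p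
        have hdiv : ((3:ℝ)/s)^p = (3:ℝ)^p / s^p :=
          Real.div_rpow (by norm_num) (by linarith) p
        rw [hdiv]
        calc (1:ℝ)/s ≤ 1/s^p := one_div_le_one_div_of_le hsp ha
          _ ≤ (3:ℝ)^p / s^p := (div_le_div_iff_of_pos_right hsp).2 hb
      have hCp : C^p ≤ C := by
        have := Real.rpow_le_rpow_of_exponent_le hC1 hp2
        rwa [Real.rpow_one] at this
      have hrN : (0:ℝ) < r^N := pow_pos hrpos N
      have hpow : ((2:ℝ)^N)^p * ((1:ℝ)/2^N) = 1 / r^N := by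
        have e1 : ((2:ℝ)^N)^p = (2:ℝ)^(((N:ℝ))*p) := by
          rw [← Real.rpow_natCast 2 N, ← Real.rpow_mul (by norm_num)]
        have e2 : ((1:ℝ)/2^N) = (2:ℝ)^(-(N:ℝ)) := by
          rw [← Real.rpow_natCast 2 N, one_div, ← Real.rpow_neg (by norm_num)]
        have e3 : r^N = (2:ℝ)^((1-p)*((N:ℝ))) := by
          rw [hrdef, ← Real.rpow_natCast ((2:ℝ)^(1-p)) N, ← Real.rpow_mul (by norm_num)]
        rw [e1, e2, e3, ← Real.rpow_add (by norm_num : (0:ℝ) < 2), one_div,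
          ← Real.rpow_neg (by norm_num : (0:ℝ) ≤ 2)]
        congr 1
        ring
      have hchain2 : (1:ℝ)/s * (1/4) ≤ C * (1/r^N) := by
        calc (1:ℝ)/s * (1/4) ≤ ((3:ℝ)/s)^p * (1/4) := by
              apply mul_le_mul_of_nonneg_right h3p (by norm_num)
          _ ≤ C^p * (((2:ℝ)^N)^p * ((1:ℝ)/2^N)) := hterm2
          _ = C^p * (1/r^N) := by rw [hpow]
          _ ≤ C * (1/r^N) := by
              apply mul_le_mul_of_nonneg_right hCp (by positivity)
      have h1 : 1/(4*s) ≤ C / r^N := by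
        calc 1/(4*s) = 1/s * (1/4) := by rw [one_div_mul_one_div, mul_comm]
          _ ≤ C * (1/r^N) := hchain2
          _ = C / r^N := by ring
      have h2 : (1/(4*s)) * r^N ≤ C := (le_div_iff₀ hrN).1 h1
      calc r^N = (4*s) * ((1/(4*s)) * r^N) := by
            rw [← mul_assoc, mul_one_div, div_self (by positivity : (4*s) ≠ 0), one_mul]
        _ ≤ (4*s) * C := mul_le_mul_of_nonneg_left h2 (by linarith)
        _ = 4*C*s := by ring
    -- contradiction from exponential growth
    have habs : |1/r| < 1 := by
      rw [abs_of_pos (by positivity), div_lt_one hrpos]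
      exact hr1
    have htend := tendsto_pow_const_mul_const_pow_of_abs_lt_one 1 habs
    have hev := (htend.eventually (gt_mem_nhds
        (show (0:ℝ) < 1/(8*C) by positivity))).and (eventually_ge_atTop 3)
    obtain ⟨N, hN1, hN3⟩ := hev.exists
    have hrN : (0:ℝ) < r^N := pow_pos hrpos N
    have hN3R : (3:ℝ) ≤ (N:ℝ) := by exact_mod_cast hN3
    have hNfrac : (N:ℝ) / r^N < 1/(8*C) := by
      have : ((N:ℝ))^(1:ℕ) * (1/r)^N < 1/(8*C) := hN1
      rw [pow_one, div_pow, one_pow, mul_one_div] at this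
      exact this
    have h8C : 8*C*(N:ℝ) < r^N := by
      rw [div_lt_div_iff₀ hrN (by positivity : (0:ℝ) < 8*C)] at hNfrac
      linarith [hNfrac]
    have hup := hkey N (by omega)
    have : 4*C*((N:ℝ)+3) ≤ 8*C*(N:ℝ) := by nlinarith [hCpos, hN3R]
    linarith
  · -- case p = 1
    subst hpeq
    obtain ⟨Nr, hNr⟩ := exists_nat_gt (32*C + 4)
    set N := Nr with hNdef
    have hNR : 32*C + 4 < (N:ℝ) := hNr
    have hN1 : (1:ℝ) ≤ (N:ℝ) := by linarith
    have hN1n : 1 ≤ N := by exact_mod_cast hN1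
    have hm := master N
    simp only [Real.rpow_one] at hm
    set s : ℝ := (N:ℝ)+3 with hsdef
    have hspos : (0:ℝ) < s := by rw [hsdef]; linarith
    have hRHS : C * (((2:ℝ)^N) * ((1:ℝ)/2^N)) = C := by
      rw [mul_one_div, div_self (by positivity : ((2:ℝ)^N) ≠ 0), mul_one]
    rw [hRHS] at hm
    have hperterm : ∀ l ∈ Finset.range N,
        (l:ℝ)/(4*s) ≤ ((2:ℝ)^l * ((l:ℝ)+2)/2) / s * ((1:ℝ)/2^(l+1)) := by
      intro l _
      have he : ((2:ℝ)^l * ((l:ℝ)+2)/2) / s * ((1:ℝ)/2^(l+1))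
          = ((l:ℝ)+2)/(4*s) := by
        rw [pow_succ]
        field_simp
        ring
      rw [he]
      exact (div_le_div_iff_of_pos_right (by linarith : (0:ℝ) < 4*s)).2 (by linarith)
    have hgauss : ∑ l ∈ Finset.range N, (l:ℝ) = (N:ℝ)*((N:ℝ)-1)/2 := by
      have hg := Finset.sum_range_id_mul_two N
      have hcast : ((∑ l ∈ Finset.range N, l : ℕ) : ℝ) * 2 = ((N * (N-1) : ℕ) : ℝ) := by
        exact_mod_cast congrArg (Nat.cast : ℕ → ℝ) hg
      rw [Nat.cast_mul, Nat.cast_sub hN1n] at hcast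
      have hsum : (∑ l ∈ Finset.range N, (l:ℝ)) = ((∑ l ∈ Finset.range N, l : ℕ) : ℝ) := by
        push_cast
        rfl
      rw [hsum]
      push_cast at hcast ⊢
      linarith
    have hLHSge : (N:ℝ)*((N:ℝ)-1)/2/(4*s) ≤ C := by
      calc (N:ℝ)*((N:ℝ)-1)/2/(4*s) = (∑ l ∈ Finset.range N, (l:ℝ))/(4*s) := by
            rw [hgauss]
        _ = ∑ l ∈ Finset.range N, (l:ℝ)/(4*s) := Finset.sum_div _ _ _
        _ ≤ ∑ l ∈ Finset.range N, ((2:ℝ)^l * ((l:ℝ)+2)/2) / s * ((1:ℝ)/2^(l+1)) :=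
            Finset.sum_le_sum hperterm
        _ ≤ C := hm
    have hfin := (div_le_iff₀ (by linarith : (0:ℝ) < 4*s)).1 hLHSge
    rw [hsdef] at hfin
    nlinarith [hfin, hNR, hC1,
      mul_pos (show (0:ℝ) < (N:ℝ) - 32*C - 4 by linarith)
        (show (0:ℝ) < (N:ℝ) + 3 by linarith)]
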